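/- arXiv:2203.01859 — 2 statements merged into one kernel-verified Lean document; each statement's English description precedes it below -/
import Mathlib

section
/- For t ∈ [0,1), a probability measure q on a parameter space Θ, and a family of nonnegative measurable functions p_θ(x), the multi-sample risk R̂^m_t(q,x) := E_{θ_1,…,θ_m ∼ q^{⊗m}}[ -log_t( (1/m)∑_{j=1}^m p_{θ_j}(x) ) ] is an upper bound on the ensemble risk R_t(q,x) := -log_t( E_{θ∼q}[p_θ(x)] ), i.e., R_t(q,x) ≤ R̂^m_t(q,x). -/
open MeasureTheory

lemma pi_map_eval_aux {Θ : Type*} [MeasurableSpace Θ] (q : Measure Θ)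
    [IsProbabilityMeasure q] {m : ℕ} (j : Fin m) :
    (Measure.pi fun _ : Fin m => q).map (fun θs => θs j) = q := by
  ext s hs
  rw [Measure.map_apply (measurable_pi_apply j) hs]
  have hpre : (fun θs : Fin m → Θ => θs j) ⁻¹' s
      = Set.pi Set.univ (Function.update (fun _ => Set.univ) j s) :=
    Set.eval_preimage
  rw [hpre, Measure.pi_pi]
  rw [Finset.prod_eq_single j]
  · simp
  · intro i _ hij; simp [Function.update_of_ne hij]
  · simp

lemma rpow_le_one_add {p x : ℝ} (hx : 0 ≤ x) (hp0 : 0 < p) (hp1 : p ≤ 1) :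
    x ^ p ≤ 1 + x := by
  rcases le_or_gt x 1 with h | h
  · have : x ^ p ≤ 1 := Real.rpow_le_one hx h hp0.le
    linarith
  · have : x ^ p ≤ x ^ (1:ℝ) := Real.rpow_le_rpow_of_exponent_le h.le hp1
    rw [Real.rpow_one] at this
    linarith

/-- The multi-sample t-log risk upper bounds the ensemble t-log risk:
`-log_t (E_{θ∼q}[p_θ(x)]) ≤ E_{θ_1,…,θ_m ∼ q^{⊗m}}[-log_t((1/m)∑_j p_{θ_j}(x))]`
for `t ∈ [0,1)`. Here `f θ = p_θ(x)` for the fixed data point `x`. -/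
theorem ensemble_risk_le_multisample_risk
    {Θ : Type*} [MeasurableSpace Θ] (q : Measure Θ) [IsProbabilityMeasure q]
    (f : Θ → ℝ) (hf_meas : Measurable f) (hf_nonneg : ∀ θ, 0 ≤ f θ)
    (hf_int : Integrable f q)
    (t : ℝ) (ht : t ∈ Set.Ico (0:ℝ) 1) (m : ℕ) (hm : 0 < m) :
    -(((∫ θ, f θ ∂q) ^ (1 - t) - 1) / (1 - t))
      ≤ ∫ θs, -((((∑ j, f (θs j)) / (m : ℝ)) ^ (1 - t) - 1) / (1 - t))
          ∂(Measure.pi fun _ : Fin m => q) := by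
  obtain ⟨ht0, ht1⟩ := ht
  have hp0 : (0:ℝ) < 1 - t := by linarith
  have hp1 : (1:ℝ) - t ≤ 1 := by linarith
  set μ := Measure.pi fun _ : Fin m => q with hμ
  haveI : IsProbabilityMeasure μ := by infer_instance
  set g : (Fin m → Θ) → ℝ := fun θs => (∑ j, f (θs j)) / (m : ℝ) with hg
  set φ : ℝ → ℝ := fun x => (x ^ (1 - t) - 1) / (1 - t) with hφ
  -- each coordinate function is integrable with integral ∫ f ∂q
  have hcoord_int : ∀ j : Fin m, Integrable (fun θs => f (θs j)) μ := by
    intro j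
    have h1 : Integrable f (μ.map (fun θs => θs j)) := by
      rw [pi_map_eval_aux q j]; exact hf_int
    exact (integrable_map_measure hf_meas.aestronglyMeasurable
      (measurable_pi_apply j).aemeasurable).mp h1
  have hcoord_eq : ∀ j : Fin m, ∫ θs, f (θs j) ∂μ = ∫ θ, f θ ∂q := by
    intro j
    rw [← pi_map_eval_aux q j,
      integral_map (measurable_pi_apply j).aemeasurable hf_meas.aestronglyMeasurable]
  have hg_int : Integrable g μ := by
    exact (integrable_finset_sum Finset.univ fun j _ => hcoord_int j).div_const _
  have hg_nonneg : ∀ θs, 0 ≤ g θs := by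
    intro θs
    apply div_nonneg _ (Nat.cast_nonneg m)
    exact Finset.sum_nonneg fun j _ => hf_nonneg _
  have hg_meas : Measurable g :=
    (Finset.measurable_sum Finset.univ fun j _ =>
      hf_meas.comp (measurable_pi_apply j)).div_const _
  have hg_integral : ∫ θs, g θs ∂μ = ∫ θ, f θ ∂q := by
    rw [hg]
    simp only [div_eq_mul_inv]
    rw [integral_mul_const, integral_finset_sum Finset.univ fun j _ => hcoord_int j]
    simp only [hcoord_eq]
    rw [Finset.sum_const, Finset.card_univ, Fintype.card_fin, nsmul_eq_mul]
    have hm' : (m : ℝ) ≠ 0 := Nat.cast_ne_zero.mpr hm.ne'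
    field_simp
  -- concavity of φ on [0, ∞)
  have hconc : ConcaveOn ℝ (Set.Ici 0) φ := by
    have h1 : ConcaveOn ℝ (Set.Ici 0) fun x : ℝ => x ^ (1 - t) :=
      Real.concaveOn_rpow hp0.le hp1
    have h2 : ConcaveOn ℝ (Set.Ici 0) fun x : ℝ => x ^ (1 - t) - 1 :=
      h1.sub (convexOn_const 1 (convex_Ici 0))
    have h3 := h2.smul (c := (1 - t)⁻¹) (by positivity)
    convert h3 using 2 with x
    any_goals simp [hφ, div_eq_inv_mul]
    all_goals rfl
  have hcont : ContinuousOn φ (Set.Ici 0) := by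
    have : Continuous fun x : ℝ => x ^ (1 - t) := by
      apply continuous_iff_continuousAt.mpr
      intro x
      exact Real.continuousAt_rpow_const x (1 - t) (Or.inr hp0.le)
    exact (((this.sub continuous_const).div_const _)).continuousOn
  have hgi : Integrable (φ ∘ g) μ := by
    have hb : Integrable (fun θs => 1 + g θs) μ := (integrable_const 1).add hg_int
    have hrpow : Integrable (fun θs => (g θs) ^ (1 - t)) μ := by
      refine hb.mono ?_ ?_
      · exact ((continuous_iff_continuousAt.mpr fun x =>
          Real.continuousAt_rpow_const x (1 - t) (Or.inr hp0.le)).measurable.comp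
          hg_meas).aestronglyMeasurable
      · filter_upwards with θs
        rw [Real.norm_eq_abs, Real.norm_eq_abs,
          abs_of_nonneg (Real.rpow_nonneg (hg_nonneg θs) _),
          abs_of_nonneg (by linarith [hg_nonneg θs] : (0:ℝ) ≤ 1 + g θs)]
        exact rpow_le_one_add (hg_nonneg θs) hp0 hp1
    have : Integrable (fun θs => ((g θs) ^ (1 - t) - 1) / (1 - t)) μ :=
      (hrpow.sub (integrable_const 1)).div_const _
    exact this
  have hjensen : (∫ θs, φ (g θs) ∂μ) ≤ φ (∫ θs, g θs ∂μ) :=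
    hconc.le_map_integral hcont isClosed_Ici
      (Filter.Eventually.of_forall fun θs => hg_nonneg θs) hg_int hgi
  rw [hg_integral] at hjensen
  have : ∫ θs, -φ (g θs) ∂μ = -∫ θs, φ (g θs) ∂μ := integral_neg _
  calc -(((∫ θ, f θ ∂q) ^ (1 - t) - 1) / (1 - t)) = -φ (∫ θ, f θ ∂q) := rfl
    _ ≤ -∫ θs, φ (g θs) ∂μ := neg_le_neg hjensen
    _ = ∫ θs, -φ (g θs) ∂μ := (integral_neg _).symm
    _ = _ := rfl
end

section
/- For the discrete distribution ν_k assigning mass 1-1/k to the point 0 and mass 2^{-k²}/k to each of the points 1,…,2^{k²}, the minimum over probability distributions p of the expected log-loss E_{ν_k}[-log p(X)] (attained at p = ν_k) tends to infinity as k → ∞, while for t ∈ [0,1) the minimum of the expected t-log-loss E_{ν_k}[-log_t p(X)] remains bounded (tends to a finite limit) as k → ∞. -/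
open Filter

/-- The distribution `ν_k` assigning mass `1 - 1/k` to the point `0` and mass
`2^(-k²)/k` to each of the points `1, …, 2^(k²)`. -/
noncomputable def nuk (k : ℕ) (i : ℕ) : ℝ :=
  if i = 0 then 1 - 1 / (k : ℝ)
  else if i ≤ 2 ^ (k ^ 2) then ((2 : ℝ) ^ (k ^ 2))⁻¹ / (k : ℝ) else 0

lemma nuk_nonneg (k i : ℕ) : 0 ≤ nuk k i := by
  unfold nuk
  split_ifs with h1 h2
  · rcases Nat.eq_zero_or_pos k with hk | hk
    · subst hk; norm_num
    · have hk1 : (1:ℝ) ≤ (k:ℝ) := by exact_mod_cast hk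
      have : 1 / (k:ℝ) ≤ 1 := by rw [div_le_one (by linarith)]; linarith
      linarith
  · positivity
  · exact le_refl 0

lemma sum_nuk (k : ℕ) : ∑ i ∈ Finset.range (2 ^ (k ^ 2) + 1), nuk k i = 1 := by
  rw [Finset.sum_range_succ']
  have h1 : ∀ i ∈ Finset.range (2 ^ (k ^ 2)), nuk k (i + 1)
      = ((2 : ℝ) ^ (k ^ 2))⁻¹ / (k : ℝ) := by
    intro i hi
    have hi' : i + 1 ≤ 2 ^ (k ^ 2) := Nat.succ_le_of_lt (Finset.mem_range.mp hi)
    rw [nuk, if_neg (Nat.succ_ne_zero i), if_pos hi']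
  rw [Finset.sum_congr rfl h1, Finset.sum_const, Finset.card_range]
  have h0 : nuk k 0 = 1 - 1 / (k:ℝ) := by rw [nuk, if_pos rfl]
  rw [h0, nsmul_eq_mul]
  have h2 : ((2:ℝ) ^ (k ^ 2)) ≠ 0 := by positivity
  have hc : ((2 ^ (k ^ 2) : ℕ) : ℝ) = (2:ℝ) ^ (k ^ 2) := by push_cast; ring
  rw [hc, div_eq_mul_inv, div_eq_mul_inv, ← mul_assoc, mul_inv_cancel₀ h2, one_mul]
  ring

/-- The minimum over (positive) probability distributions `p` on the support of
`ν_k` of the expected log-loss `E_{ν_k}[-log p(X)]` tends to infinity as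
`k → ∞`, whereas for every `t ∈ [0,1)` the minimum of the expected t-log-loss
`E_{ν_k}[-log_t p(X)]` remains bounded as `k → ∞`. -/
theorem log_loss_unbounded_tlog_loss_bounded :
    Tendsto
      (fun k : ℕ => sInf {L : ℝ | ∃ p : ℕ → ℝ,
        (∀ i ∈ Finset.range (2 ^ (k ^ 2) + 1), 0 < p i) ∧
        (∑ i ∈ Finset.range (2 ^ (k ^ 2) + 1), p i) = 1 ∧
        L = -∑ i ∈ Finset.range (2 ^ (k ^ 2) + 1), nuk k i * Real.log (p i)})
      atTop atTop
    ∧ ∀ t : ℝ, t ∈ Set.Ico (0:ℝ) 1 → ∃ B : ℝ, ∀ k : ℕ,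
        sInf {L : ℝ | ∃ p : ℕ → ℝ,
          (∀ i ∈ Finset.range (2 ^ (k ^ 2) + 1), 0 < p i) ∧
          (∑ i ∈ Finset.range (2 ^ (k ^ 2) + 1), p i) = 1 ∧
          L = -∑ i ∈ Finset.range (2 ^ (k ^ 2) + 1),
                nuk k i * (((p i) ^ (1 - t) - 1) / (1 - t))}
        ≤ B := by
  -- uniform distribution witness facts
  have hNpos : ∀ k : ℕ, (0:ℝ) < ((2 ^ (k ^ 2) + 1 : ℕ) : ℝ) := by
    intro k; positivity
  have hupos : ∀ k : ℕ, (0:ℝ) < (((2 ^ (k ^ 2) + 1 : ℕ) : ℝ))⁻¹ := by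
    intro k; exact inv_pos.mpr (hNpos k)
  have husum : ∀ k : ℕ,
      (∑ _i ∈ Finset.range (2 ^ (k ^ 2) + 1), (((2 ^ (k ^ 2) + 1 : ℕ) : ℝ))⁻¹) = 1 := by
    intro k
    rw [Finset.sum_const, Finset.card_range, nsmul_eq_mul]
    exact mul_inv_cancel₀ (ne_of_gt (hNpos k))
  constructor
  · -- log-loss part
    apply tendsto_atTop_mono' atTop ?hle
      ((tendsto_natCast_atTop_atTop (R := ℝ)).atTop_mul_const (Real.log_pos one_lt_two))
    filter_upwards [eventually_ge_atTop 1] with k hk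
    have hkR : (1:ℝ) ≤ (k:ℝ) := by exact_mod_cast hk
    have hkpos : (0:ℝ) < (k:ℝ) := by linarith
    set n : ℕ := 2 ^ (k ^ 2) with hn
    have hnpos : 0 < n := Nat.pow_pos (by norm_num)
    have hnR : (0:ℝ) < (n:ℝ) := by exact_mod_cast hnpos
    have hcast : ((n:ℕ):ℝ) = (2:ℝ) ^ (k ^ 2) := by rw [hn]; push_cast; ring
    apply le_csInf
    · exact ⟨_, fun _ => (((2 ^ (k ^ 2) + 1 : ℕ) : ℝ))⁻¹, fun i _ => hupos k, husum k, rfl⟩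
    · rintro L ⟨p, hp, hsum, rfl⟩
      have hp0 : 0 < p 0 := hp 0 (Finset.mem_range.mpr (Nat.succ_pos _))
      have hp0le : p 0 ≤ 1 := by
        rw [← hsum]
        exact Finset.single_le_sum (f := p) (fun i hi => (hp i hi).le)
          (Finset.mem_range.mpr (Nat.succ_pos _))
      have hs : ∑ i ∈ Finset.range n, p (i + 1) = 1 - p 0 := by
        have h := Finset.sum_range_succ' p n
        rw [hsum] at h   -- wrong direction maybe
        linarith [h]
      have hspos : 0 < ∑ i ∈ Finset.range n, p (i + 1) :=
        Finset.sum_pos (fun i hi => hp (i + 1) (Finset.mem_range.mpr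
          (by have := Finset.mem_range.mp hi; omega))) ⟨0, Finset.mem_range.mpr hnpos⟩
      -- Jensen
      have hjensen : ∑ i ∈ Finset.range n, ((n:ℝ))⁻¹ * Real.log (p (i + 1))
          ≤ Real.log (∑ i ∈ Finset.range n, ((n:ℝ))⁻¹ * p (i + 1)) := by
        have := (strictConcaveOn_log_Ioi.concaveOn).le_map_sum
          (w := fun _ : ℕ => ((n:ℝ))⁻¹) (p := fun i => p (i + 1)) (t := Finset.range n)
          (fun i _ => (inv_pos.mpr hnR).le)
          (by rw [Finset.sum_const, Finset.card_range, nsmul_eq_mul]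
              exact mul_inv_cancel₀ (ne_of_gt hnR))
          (fun i hi => Set.mem_Ioi.mpr (hp (i + 1) (Finset.mem_range.mpr
            (by have := Finset.mem_range.mp hi; omega))))
        simpa [smul_eq_mul] using this
      have hlogle : Real.log (∑ i ∈ Finset.range n, ((n:ℝ))⁻¹ * p (i + 1))
          ≤ -((k:ℝ)^2 * Real.log 2) := by
        rw [← Finset.mul_sum, hs]
        have h1 : ((n:ℝ))⁻¹ * (1 - p 0) ≤ ((n:ℝ))⁻¹ :=
          mul_le_of_le_one_right (inv_pos.mpr hnR).le (by linarith)
        have h2 : (0:ℝ) < ((n:ℝ))⁻¹ * (1 - p 0) := by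
          rw [hs] at hspos
          exact mul_pos (inv_pos.mpr hnR) hspos
        calc Real.log (((n:ℝ))⁻¹ * (1 - p 0)) ≤ Real.log (((n:ℝ))⁻¹) :=
              Real.log_le_log h2 h1
          _ = -((k:ℝ)^2 * Real.log 2) := by
              rw [Real.log_inv, hcast, Real.log_pow]
              push_cast; ring
      have hS : ∑ i ∈ Finset.range n, Real.log (p (i + 1))
          ≤ -((n:ℝ) * ((k:ℝ)^2 * Real.log 2)) := by
        have h := le_trans hjensen hlogle
        rw [← Finset.mul_sum] at h
        have := mul_le_mul_of_nonneg_left h hnR.le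
        rw [← mul_assoc, mul_inv_cancel₀ (ne_of_gt hnR), one_mul] at this
        linarith [this]
      -- rewrite L
      rw [Finset.sum_range_succ']
      have hval : ∀ i ∈ Finset.range n, nuk k (i + 1) * Real.log (p (i + 1))
          = ((2:ℝ) ^ (k ^ 2))⁻¹ / (k:ℝ) * Real.log (p (i + 1)) := by
        intro i hi
        have hi' : i + 1 ≤ 2 ^ (k ^ 2) := Nat.succ_le_of_lt (Finset.mem_range.mp hi)
        rw [nuk, if_neg (Nat.succ_ne_zero i), if_pos hi']
      rw [Finset.sum_congr rfl hval, ← Finset.mul_sum]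
      set c : ℝ := ((2:ℝ) ^ (k ^ 2))⁻¹ / (k:ℝ) with hcdef
      have hcpos : 0 < c := by rw [hcdef]; positivity
      set S : ℝ := ∑ i ∈ Finset.range n, Real.log (p (i + 1)) with hSdef
      have h5 : c * S ≤ c * (-((n:ℝ) * ((k:ℝ)^2 * Real.log 2))) :=
        mul_le_mul_of_nonneg_left hS hcpos.le
      have h6 : nuk k 0 * Real.log (p 0) ≤ 0 :=
        mul_nonpos_of_nonneg_of_nonpos (nuk_nonneg k 0) (Real.log_nonpos hp0.le hp0le)
      have hfinal : c * ((n:ℝ) * ((k:ℝ)^2 * Real.log 2)) = (k:ℝ) * Real.log 2 := by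
        rw [hcdef, hcast]
        field_simp
      nlinarith [h5, h6, hfinal]
  · -- t-log-loss part
    intro t ht
    obtain ⟨ht0, ht1⟩ := ht
    have h1t : (0:ℝ) < 1 - t := by linarith
    refine ⟨1 / (1 - t), fun k => ?_⟩
    have hbdd : BddBelow {L : ℝ | ∃ p : ℕ → ℝ,
        (∀ i ∈ Finset.range (2 ^ (k ^ 2) + 1), 0 < p i) ∧
        (∑ i ∈ Finset.range (2 ^ (k ^ 2) + 1), p i) = 1 ∧
        L = -∑ i ∈ Finset.range (2 ^ (k ^ 2) + 1),
              nuk k i * (((p i) ^ (1 - t) - 1) / (1 - t))} := by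
      refine ⟨0, ?_⟩
      rintro L ⟨p, hp, hsum, rfl⟩
      have hterm : ∀ i ∈ Finset.range (2 ^ (k ^ 2) + 1),
          nuk k i * (((p i) ^ (1 - t) - 1) / (1 - t)) ≤ 0 := by
        intro i hi
        have hpi : 0 < p i := hp i hi
        have hpile : p i ≤ 1 := by
          rw [← hsum]
          exact Finset.single_le_sum (f := p) (fun j hj => (hp j hj).le) hi
        have hr : (p i) ^ (1 - t) ≤ 1 := Real.rpow_le_one hpi.le hpile h1t.le
        exact mul_nonpos_of_nonneg_of_nonpos (nuk_nonneg k i)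
          (div_nonpos_of_nonpos_of_nonneg (by linarith) h1t.le)
      have := Finset.sum_nonpos hterm
      simpa using neg_nonneg.mpr this
    have hmem : (-(((((2 ^ (k ^ 2) + 1 : ℕ) : ℝ))⁻¹ ^ (1 - t) - 1) / (1 - t)))
        ∈ {L : ℝ | ∃ p : ℕ → ℝ,
        (∀ i ∈ Finset.range (2 ^ (k ^ 2) + 1), 0 < p i) ∧
        (∑ i ∈ Finset.range (2 ^ (k ^ 2) + 1), p i) = 1 ∧
        L = -∑ i ∈ Finset.range (2 ^ (k ^ 2) + 1),
              nuk k i * (((p i) ^ (1 - t) - 1) / (1 - t))} := by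
      refine ⟨fun _ => (((2 ^ (k ^ 2) + 1 : ℕ) : ℝ))⁻¹, fun i _ => hupos k, husum k, ?_⟩
      rw [← Finset.sum_mul, sum_nuk, one_mul]
    refine le_trans (csInf_le hbdd hmem) ?_
    have hr0 : (0:ℝ) ≤ (((2 ^ (k ^ 2) + 1 : ℕ) : ℝ))⁻¹ ^ (1 - t) :=
      Real.rpow_nonneg (hupos k).le _
    rw [neg_div' , neg_sub]  -- may not work; fallback below
    rw [div_le_div_iff₀ h1t h1t]
    nlinarith [hr0, h1t]
end
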